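/- Fix a natural number j with 2 ≤ j < ω. Let L = {∼} be the language with one binary relation symbol, and let M be an L-structure with countably infinite domain in which ∼ is an equivalence relation with infinitely many equivalence classes, each of size exactly j. Then M has the externally definable Ramsey property, but M does not have the point-Ramsey property. (Proposition 6.3(1).) -/

import Mathlib

open FirstOrder FirstOrder.Language CategoryTheory

universe u v w

namespace EDRP

/-- The colouring `χ` of the copies of `A` in `M` (copies identified with embeddings
`A ↪[L] M`) is externally definable by the formulas `φ i`: there are an elementary extension
`N ⪰ M` and a parameter tuple `ē` in `N` such that `χ(f(ā)) = i` iff `N ⊨ φ i (ē, f(ā))`. -/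
def ExtDefinableBy (L : FirstOrder.Language.{u, v}) (M : Type w) [L.Structure M]
    (A : Type w) [L.Structure A]
    {k e : ℕ} (φ : Fin k → L.Formula (Fin e ⊕ A)) (χ : (A ↪[L] M) → Fin k) : Prop :=
  ∃ (N : Bundled.{w} L.Structure) (emb : M ↪ₑ[L] N) (eb : Fin e → N),
    ∀ (f : A ↪[L] M) (i : Fin k),
      χ f = i ↔ (φ i).Realize (Sum.elim eb fun a => emb (f a))

/-- `χ` is an externally definable `k`-colouring of the copies of `A` in `M`. -/
def ExtDefinable (L : FirstOrder.Language.{u, v}) (M : Type w) [L.Structure M]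
    (A : Type w) [L.Structure A] {k : ℕ} (χ : (A ↪[L] M) → Fin k) : Prop :=
  ∃ (e : ℕ) (φ : Fin k → L.Formula (Fin e ⊕ A)), ExtDefinableBy L M A φ χ

/-- The copy of `B` in `M` given by the embedding `g` is `χ`-monochromatic: `χ` is constant
on the copies of `A` lying inside the image of `g`. -/
def MonochromaticOn (L : FirstOrder.Language.{u, v}) (M : Type w) [L.Structure M]
    (A B : Type w) [L.Structure A] [L.Structure B]
    {k : ℕ} (χ : (A ↪[L] M) → Fin k) (g : B ↪[L] M) : Prop :=
  ∀ f₁ f₂ : A ↪[L] M, Set.range (f₁ : A → M) ⊆ Set.range (g : B → M) →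
    Set.range (f₂ : A → M) ⊆ Set.range (g : B → M) → χ f₁ = χ f₂

/-- `M` has the externally definable `ā`-Ramsey property, where `ā` enumerates `A`:
for every `k ≥ 1`, every `B` in the age of `M` and every externally definable `k`-colouring `χ`
of the copies of `A` in `M`, there is a `χ`-monochromatic copy of `B` in `M`. -/
def ExtDefARamsey (L : FirstOrder.Language.{u, v}) (M : Type w) [L.Structure M]
    (A : Type w) [L.Structure A] : Prop :=
  ∀ (k : ℕ), 1 ≤ k → ∀ (B : Type w) [L.Structure B], Finite B → Nonempty (B ↪[L] M) →
    ∀ χ : (A ↪[L] M) → Fin k, ExtDefinable L M A χ →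
      ∃ g : B ↪[L] M, MonochromaticOn L M A B χ g

/-- `M` has the externally definable Ramsey property. -/
def ExtDefRamsey (L : FirstOrder.Language.{u, v}) (M : Type w) [L.Structure M] : Prop :=
  ∀ (A : Type w) [L.Structure A], Finite A → Nonempty (A ↪[L] M) → ExtDefARamsey L M A

/-- `M` has the point-Ramsey property: for every one-element `A` in the age of `M`, every
`k ≥ 1`, every `k`-colouring of the copies of `A` in `M` (not necessarily definable) and every
`B` in the age of `M`, there is a monochromatic copy of `B` in `M`. -/
def PointRamsey (L : FirstOrder.Language.{u, v}) (M : Type w) [L.Structure M] : Prop :=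
  ∀ (A : Type w) [L.Structure A], Finite A → Nat.card A = 1 → Nonempty (A ↪[L] M) →
    ∀ (k : ℕ), 1 ≤ k → ∀ (B : Type w) [L.Structure B], Finite B → Nonempty (B ↪[L] M) →
      ∀ χ : (A ↪[L] M) → Fin k, ∃ g : B ↪[L] M, MonochromaticOn L M A B χ g

/-- The interpretation in `M` of the unique binary relation symbol of the language
`Language.graph` consisting of a single binary relation symbol. -/
abbrev simRel (M : Type w) [Language.graph.Structure M] (a b : M) : Prop :=
  Structure.RelMap Language.adj ![a, b]


set_option linter.unusedSectionVars false
set_option linter.unusedVariables false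

lemma vec_eta {α : Type*} (x : Fin 2 → α) : ![x 0, x 1] = x := by
  funext i; fin_cases i <;> rfl

lemma relMap_eq_sim {M : Type*} [Language.graph.Structure M] (x : Fin 2 → M) :
    Structure.RelMap Language.adj x ↔ simRel M (x 0) (x 1) := by
  rw [simRel, vec_eta]

lemma comp_vec {α β : Type*} (f : α → β) (x y : α) : f ∘ ![x, y] = ![f x, f y] := by
  funext i; fin_cases i <;> rfl

lemma emb_sim {M N : Type*} [Language.graph.Structure M] [Language.graph.Structure N]
    (F : M ↪[Language.graph] N) (x y : M) :
    simRel N (F x) (F y) ↔ simRel M x y := by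
  have := F.map_rel Language.adj ![x, y]
  rwa [comp_vec] at this

lemma ee_sim {M N : Type*} [Language.graph.Structure M] [Language.graph.Structure N]
    (F : M ↪ₑ[Language.graph] N) (x y : M) :
    simRel N (F x) (F y) ↔ simRel M x y :=
  emb_sim F.toEmbedding x y


noncomputable def adjF {α : Type*} (x y : α) : Language.graph.Formula α :=
  Language.adj.formula₂ (Term.var x) (Term.var y)

@[simp] lemma realize_adjF {α : Type*} {M : Type*} [Language.graph.Structure M]
    (x y : α) (v : α → M) : (adjF x y).Realize v ↔ simRel M (v x) (v y) := by
  simp [adjF, Formula.realize_rel₂, simRel, Term.realize]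

@[simp] lemma realize_adjF0 {α : Type*} {M : Type*} [Language.graph.Structure M]
    (x y : α) (v : α → M) (xs : Fin 0 → M) :
    BoundedFormula.Realize (adjF x y) v xs ↔ simRel M (v x) (v y) := by
  rw [Subsingleton.elim xs default]
  exact realize_adjF x y v

/-- universal closure over a finite variable type -/
noncomputable def allsF {γ : Type} [Finite γ] (φ : Language.graph.Formula γ) :
    Language.graph.Sentence :=
  Formula.iAlls γ (φ.relabel (Sum.inr : γ → Empty ⊕ γ))

@[simp] lemma realize_allsF {γ : Type} [Finite γ] {M : Type*} [Language.graph.Structure M]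
    (φ : Language.graph.Formula γ) :
    M ⊨ allsF φ ↔ ∀ xs : γ → M, φ.Realize xs := by
  rw [allsF, Sentence.Realize, Formula.realize_iAlls]
  constructor
  · intro h xs; simpa using h xs
  · intro h i; simpa using h i

/-- reflexivity sentence -/
noncomputable def reflS : Language.graph.Sentence := allsF (γ := Fin 1) (adjF 0 0)

lemma realize_reflS {M : Type*} [Language.graph.Structure M] :
    M ⊨ reflS ↔ ∀ a : M, simRel M a a := by
  rw [reflS, realize_allsF]
  constructor
  · intro h a; simpa using h (fun _ => a)
  · intro h xs; simpa using h (xs 0)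

noncomputable def symmS : Language.graph.Sentence :=
  allsF (γ := Fin 2) ((adjF 0 1).imp (adjF 1 0))

lemma realize_symmS {M : Type*} [Language.graph.Structure M] :
    M ⊨ symmS ↔ ∀ a b : M, simRel M a b → simRel M b a := by
  rw [symmS, realize_allsF]
  constructor
  · intro h a b; simpa using h ![a, b]
  · intro h xs; simpa using h (xs 0) (xs 1)

noncomputable def transS : Language.graph.Sentence :=
  allsF (γ := Fin 3) ((adjF 0 1).imp ((adjF 1 2).imp (adjF 0 2)))

lemma realize_transS {M : Type*} [Language.graph.Structure M] :
    M ⊨ transS ↔ ∀ a b c : M, simRel M a b → simRel M b c → simRel M a c := by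
  rw [transS, realize_allsF]
  constructor
  · intro h a b c; simpa using h ![a, b, c]
  · intro h xs; simpa using h (xs 0) (xs 1) (xs 2)


/-- every class has at least j elements -/
noncomputable def geS (j : ℕ) : Language.graph.Sentence :=
  allsF (γ := Fin 1)
    (Formula.iExs (Fin j)
      ((BoundedFormula.iInf fun i : Fin j => adjF (Sum.inl 0) (Sum.inr i)) ⊓
        (BoundedFormula.iInf fun p : {p : Fin j × Fin j // p.1 ≠ p.2} =>
          ((Term.var (Sum.inl (Sum.inr p.1.1))).bdEqual
            (Term.var (Sum.inl (Sum.inr p.1.2)))).not)))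

lemma realize_geS {j : ℕ} {M : Type*} [Language.graph.Structure M] :
    M ⊨ geS j ↔ ∀ a : M, ∃ y : Fin j → M, (∀ i, simRel M a (y i)) ∧ Function.Injective y := by
  rw [geS, realize_allsF]
  constructor
  · intro h a
    have := h (fun _ => a)
    rw [Formula.realize_iExs] at this
    obtain ⟨y, hy⟩ := this
    rw [Formula.Realize, BoundedFormula.realize_inf, BoundedFormula.realize_iInf,
      BoundedFormula.realize_iInf] at hy
    refine ⟨y, fun i => ?_, fun i i' hii => ?_⟩
    · have := hy.1 i
      simpa using this
    · by_contra hne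
      have := hy.2 ⟨(i, i'), hne⟩
      simp only [BoundedFormula.realize_not, BoundedFormula.realize_bdEqual,
        Term.realize_var] at this
      exact this (by simpa using hii)
  · intro h xs
    obtain ⟨y, hy1, hy2⟩ := h (xs 0)
    rw [Formula.realize_iExs]
    refine ⟨y, ?_⟩
    rw [Formula.Realize, BoundedFormula.realize_inf, BoundedFormula.realize_iInf,
      BoundedFormula.realize_iInf]
    constructor
    · intro i
      simpa using hy1 i
    · intro p
      simp only [BoundedFormula.realize_not, BoundedFormula.realize_bdEqual, Term.realize_var]
      intro heq
      exact p.2 (hy2 (by simpa using heq))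

/-- every class has at most j elements (no j+1 distinct related elements) -/
noncomputable def leS (j : ℕ) : Language.graph.Sentence :=
  allsF (γ := Fin 1 ⊕ Fin (j + 1))
    ((BoundedFormula.iInf fun i : Fin (j + 1) => adjF (Sum.inl 0) (Sum.inr i)).imp
      (BoundedFormula.iSup fun p : {p : Fin (j + 1) × Fin (j + 1) // p.1 ≠ p.2} =>
        (Term.var (Sum.inl (Sum.inr p.1.1))).bdEqual (Term.var (Sum.inl (Sum.inr p.1.2)))))

lemma realize_leS {j : ℕ} {M : Type*} [Language.graph.Structure M] :
    M ⊨ leS j ↔ ∀ (a : M) (y : Fin (j + 1) → M), (∀ i, simRel M a (y i)) →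
      ∃ i i', i ≠ i' ∧ y i = y i' := by
  rw [leS, realize_allsF]
  constructor
  · intro h a y hy
    have := h (Sum.elim (fun _ => a) y)
    rw [Formula.Realize, BoundedFormula.realize_imp, BoundedFormula.realize_iInf,
      BoundedFormula.realize_iSup] at this
    obtain ⟨p, hpeq⟩ := this (fun i => by simpa using hy i)
    rw [BoundedFormula.realize_bdEqual] at hpeq
    exact ⟨p.1.1, p.1.2, p.2, by simpa using hpeq⟩
  · intro h xs
    rw [Formula.Realize, BoundedFormula.realize_imp, BoundedFormula.realize_iInf,
      BoundedFormula.realize_iSup]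
    intro hall
    obtain ⟨i, i', hne, heq⟩ := h (xs (Sum.inl 0)) (fun i => xs (Sum.inr i))
      (fun i => by simpa using hall i)
    refine ⟨⟨(i, i'), hne⟩, ?_⟩
    rw [BoundedFormula.realize_bdEqual]
    simpa using heq

/-- there exist n pairwise non-equivalent elements -/
noncomputable def manyS (n : ℕ) : Language.graph.Sentence :=
  Formula.iExs (Fin n)
    (BoundedFormula.iInf fun p : {p : Fin n × Fin n // p.1 ≠ p.2} =>
      (adjF (Sum.inr p.1.1) (Sum.inr p.1.2)).not)

lemma realize_manyS {n : ℕ} {M : Type*} [Language.graph.Structure M] :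
    M ⊨ manyS n ↔ ∃ y : Fin n → M, ∀ i i', i ≠ i' → ¬ simRel M (y i) (y i') := by
  rw [manyS, Sentence.Realize, Formula.realize_iExs]
  constructor
  · rintro ⟨y, hy⟩
    rw [Formula.Realize, BoundedFormula.realize_iInf] at hy
    refine ⟨y, fun i i' hne => ?_⟩
    have := hy ⟨(i, i'), hne⟩
    rw [BoundedFormula.realize_not] at this
    simpa using this
  · rintro ⟨y, hy⟩
    refine ⟨y, ?_⟩
    rw [Formula.Realize, BoundedFormula.realize_iInf]
    intro p
    rw [BoundedFormula.realize_not]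
    simpa using hy p.1.1 p.1.2 p.2



section Karp

variable {N : Type*} [Language.graph.Structure N]

/-- a set of pairs is a partial isomorphism -/
def Good (N : Type*) [Language.graph.Structure N] (s : Set (N × N)) : Prop :=
  ∀ p ∈ s, ∀ q ∈ s, (p.1 = q.1 ↔ p.2 = q.2) ∧ (simRel N p.1 q.1 ↔ simRel N p.2 q.2)

lemma Good.swap {s : Set (N × N)} (h : Good N s) : Good N (Prod.swap '' s) := by
  rintro p ⟨p', hp', rfl⟩ q ⟨q', hq', rfl⟩
  exact ⟨(h p' hp' q' hq').1.symm, (h p' hp' q' hq').2.symm⟩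

variable (hrefl : ∀ a : N, simRel N a a)
  (hsymm : ∀ a b : N, simRel N a b → simRel N b a)
  (htrans : ∀ a b c : N, simRel N a b → simRel N b c → simRel N a c)

include hrefl hsymm htrans in
lemma many_avoid
    (hmany : ∀ n, ∃ y : Fin n → N, ∀ i i', i ≠ i' → ¬ simRel N (y i) (y i'))
    (T : Set N) (hT : T.Finite) : ∃ d : N, ∀ t ∈ T, ¬ simRel N d t := by
  classical
  obtain ⟨y, hy⟩ := hmany (hT.toFinset.card + 1)
  by_contra hcon
  push_neg at hcon
  have h2 : ∀ i, ∃ t ∈ T, simRel N (y i) t := by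
    intro i
    exact hcon (y i)
  choose t ht hs using h2
  have hcard : Fintype.card hT.toFinset < Fintype.card (Fin (hT.toFinset.card + 1)) := by
    simp
  obtain ⟨i, i', hne, heq⟩ := Fintype.exists_ne_map_eq_of_card_lt
    (fun i => (⟨t i, hT.mem_toFinset.2 (ht i)⟩ : hT.toFinset)) hcard
  have : t i = t i' := by simpa using heq
  exact hy i i' hne (htrans _ _ _ (hs i) (hsymm _ _ (this ▸ hs i')))

include hrefl hsymm htrans in
/-- forth extension -/
lemma good_forth {j : ℕ}
    (hge : ∀ a : N, ∃ y : Fin j → N, (∀ i, simRel N a (y i)) ∧ Function.Injective y)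
    (hle : ∀ (a : N) (y : Fin (j + 1) → N), (∀ i, simRel N a (y i)) →
      ∃ i i', i ≠ i' ∧ y i = y i')
    (hmany : ∀ n, ∃ y : Fin n → N, ∀ i i', i ≠ i' → ¬ simRel N (y i) (y i'))
    (s : Set (N × N)) (hgood : Good N s) (hfin : s.Finite) (c : N) :
    ∃ d : N, Good N (insert (c, d) s) := by
  classical
  by_cases h1 : ∃ p ∈ s, p.1 = c
  · -- c is already in the domain
    obtain ⟨p, hp, rfl⟩ := h1
    refine ⟨p.2, ?_⟩
    rintro q (rfl | hq) q' (rfl | hq')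
    · exact hgood p hp p hp
    · exact hgood p hp q' hq'
    · exact hgood q hq p hp
    · exact hgood q hq q' hq'
  · push_neg at h1
    by_cases h2 : ∃ p ∈ s, simRel N c p.1
    · -- c's class is represented: find an unused element of the target class
      obtain ⟨p, hp, hpc⟩ := h2
      obtain ⟨y, hy1, hy2⟩ := hge p.2
      have key : ∃ i : Fin j, ∀ q ∈ s, simRel N q.1 c → q.2 ≠ y i := by
        by_contra hcon
        push_neg at hcon
        have h3 : ∀ i, ∃ q ∈ s, simRel N q.1 c ∧ q.2 = y i := by
          intro i
          obtain ⟨q, hq, hq1, hq2⟩ := hcon i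
          exact ⟨q, hq, hq1, hq2⟩
        choose q hq hq1 hq2 using h3
        -- the elements c, (q i).1 are j+1 distinct elements of the class of c
        have hz := hle c (Fin.cons c fun i => (q i).1) ?_
        · obtain ⟨i, i', hne, heq⟩ := hz
          rcases Fin.eq_zero_or_eq_succ i with rfl | ⟨i0, rfl⟩
          · rcases Fin.eq_zero_or_eq_succ i' with rfl | ⟨i0', rfl⟩
            · exact hne rfl
            · rw [Fin.cons_zero, Fin.cons_succ] at heq
              exact h1 (q i0') (hq i0') heq.symm
          · rcases Fin.eq_zero_or_eq_succ i' with rfl | ⟨i0', rfl⟩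
            · rw [Fin.cons_zero, Fin.cons_succ] at heq
              exact h1 (q i0) (hq i0) heq
            · rw [Fin.cons_succ, Fin.cons_succ] at heq
              have : (q i0).2 = (q i0').2 :=
                (hgood _ (hq i0) _ (hq i0')).1.mp heq
              rw [hq2 i0, hq2 i0'] at this
              have : i0 = i0' := hy2 this
              exact hne (by rw [this])
        · intro i
          rcases Fin.eq_zero_or_eq_succ i with rfl | ⟨i0, rfl⟩
          · rw [Fin.cons_zero]; exact hrefl c
          · rw [Fin.cons_succ]
            exact hsymm _ _ ((hq1 i0))
      obtain ⟨i, hi⟩ := key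
      refine ⟨y i, ?_⟩
      have hsimcd : ∀ q ∈ s, (simRel N c q.1 ↔ simRel N (y i) q.2) := by
        intro q hq
        constructor
        · intro hcq
          -- q.1 ∼ c ∼ p.1 so q.2 ∼ p.2 ∼ y i
          have hqp : simRel N q.1 p.1 := htrans _ _ _ (hsymm _ _ hcq) hpc
          have : simRel N q.2 p.2 := (hgood q hq p hp).2.mp hqp
          exact hsymm _ _ (htrans _ _ _ this (hy1 i))
        · intro hdq
          have : simRel N q.2 p.2 := htrans _ _ _ (hsymm _ _ hdq) (hsymm _ _ (hy1 i))
          have hqp : simRel N q.1 p.1 := (hgood q hq p hp).2.mpr this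
          exact htrans _ _ _ hpc (hsymm _ _ hqp)
      have heqcd : ∀ q ∈ s, (c = q.1 ↔ y i = q.2) := by
        intro q hq
        constructor
        · intro h; exact absurd h.symm (h1 q hq)
        · intro h
          exfalso
          have hq2 : simRel N (y i) q.2 := h ▸ hrefl q.2
          have : simRel N c q.1 := (hsimcd q hq).mpr hq2
          exact hi q hq (hsymm _ _ this) h.symm
      rintro q (rfl | hq) q' (rfl | hq')
      · exact ⟨iff_of_true rfl rfl, iff_of_true (hrefl _) (hrefl _)⟩
      · exact ⟨heqcd q' hq', hsimcd q' hq'⟩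
      · refine ⟨?_, ?_⟩
        · rw [eq_comm, eq_comm (a := q.2)]; exact heqcd q hq
        · constructor
          · intro h; exact hsymm _ _ ((hsimcd q hq).mp (hsymm _ _ h))
          · intro h; exact hsymm _ _ ((hsimcd q hq).mpr (hsymm _ _ h))
      · exact hgood q hq q' hq'
    · -- c's class is fresh: pick d in a fresh class
      push_neg at h2
      obtain ⟨d, hd⟩ := many_avoid hrefl hsymm htrans hmany
        (Prod.snd '' s) (hfin.image _)
      refine ⟨d, ?_⟩
      have hnc : ∀ q ∈ s, ¬ simRel N c q.1 := fun q hq => h2 q hq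
      have hnd : ∀ q ∈ s, ¬ simRel N d q.2 := fun q hq => hd q.2 ⟨q, hq, rfl⟩
      rintro q (rfl | hq) q' (rfl | hq')
      · exact ⟨iff_of_true rfl rfl, iff_of_true (hrefl _) (hrefl _)⟩
      · refine ⟨?_, ?_⟩
        · constructor
          · rintro rfl; exact absurd (hrefl _) (hnc q' hq')
          · rintro rfl; exact absurd (hrefl _) (hnd q' hq')
        · constructor
          · intro h; exact absurd h (hnc q' hq')
          · intro h; exact absurd h (hnd q' hq')
      · refine ⟨?_, ?_⟩
        · constructor
          · rintro rfl; exact absurd (hrefl _) (hnc q hq)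
          · rintro rfl; exact absurd (hrefl _) (hnd q hq)
        · constructor
          · intro h; exact absurd (hsymm _ _ h) (hnc q hq)
          · intro h; exact absurd (hsymm _ _ h) (hnd q hq)
      · exact hgood q hq q' hq'

lemma term_is_var {β : Type*} (t : Language.graph.Term β) : ∃ x, t = Term.var x := by
  cases t with
  | var x => exact ⟨x, rfl⟩
  | func f ts => exact isEmptyElim f

lemma relMap_eq_sim' (x : Fin 2 → N) :
    Structure.RelMap Language.adj x ↔ simRel N (x 0) (x 1) := by
  rw [simRel, vec_eta]

include hrefl hsymm htrans in
lemma good_back {j : ℕ}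
    (hge : ∀ a : N, ∃ y : Fin j → N, (∀ i, simRel N a (y i)) ∧ Function.Injective y)
    (hle : ∀ (a : N) (y : Fin (j + 1) → N), (∀ i, simRel N a (y i)) →
      ∃ i i', i ≠ i' ∧ y i = y i')
    (hmany : ∀ n, ∃ y : Fin n → N, ∀ i i', i ≠ i' → ¬ simRel N (y i) (y i'))
    (s : Set (N × N)) (hgood : Good N s) (hfin : s.Finite) (d : N) :
    ∃ c : N, Good N (insert (c, d) s) := by
  obtain ⟨c, hc⟩ := good_forth hrefl hsymm htrans hge hle hmany
    (Prod.swap '' s) hgood.swap (hfin.image _) d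
  refine ⟨c, ?_⟩
  have h1 : insert (d, c) (Prod.swap '' s) = Prod.swap '' insert (c, d) s := by
    rw [Set.image_insert_eq]; rfl
  rw [h1] at hc
  have h2 := hc.swap
  rwa [Set.image_image, show (fun x : N × N => Prod.swap (Prod.swap x)) = id from
    funext fun x => Prod.swap_swap x, Set.image_id] at h2

include hrefl hsymm htrans in
lemma karp {j : ℕ} {α : Type*}
    (hge : ∀ a : N, ∃ y : Fin j → N, (∀ i, simRel N a (y i)) ∧ Function.Injective y)
    (hle : ∀ (a : N) (y : Fin (j + 1) → N), (∀ i, simRel N a (y i)) →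
      ∃ i i', i ≠ i' ∧ y i = y i')
    (hmany : ∀ n, ∃ y : Fin n → N, ∀ i i', i ≠ i' → ¬ simRel N (y i) (y i'))
    {n : ℕ} (φ : Language.graph.BoundedFormula α n) :
    ∀ (s : Set (N × N)), Good N s → s.Finite →
      ∀ (v w : α → N) (xs ys : Fin n → N),
        (∀ a, (v a, w a) ∈ s) → (∀ i, (xs i, ys i) ∈ s) →
        (φ.Realize v xs ↔ φ.Realize w ys) := by
  induction φ with
  | falsum => intro s _ _ v w xs ys _ _; exact Iff.rfl
  | equal t₁ t₂ =>
    intro s hgood hfin v w xs ys hv hx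
    obtain ⟨x₁, rfl⟩ := term_is_var t₁
    obtain ⟨x₂, rfl⟩ := term_is_var t₂
    have pair : ∀ z : α ⊕ Fin _, (Sum.elim v xs z, Sum.elim w ys z) ∈ s := by
      rintro (a | i)
      · exact hv a
      · exact hx i
    show Sum.elim v xs x₁ = Sum.elim v xs x₂ ↔ Sum.elim w ys x₁ = Sum.elim w ys x₂
    exact (hgood _ (pair x₁) _ (pair x₂)).1
  | rel R ts =>
    intro s hgood hfin v w xs ys hv hx
    cases R with
    | adj =>
      have hvar : ∀ i, ∃ x, ts i = Term.var x := fun i => term_is_var (ts i)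
      choose xv hxv using hvar
      have pair : ∀ z : α ⊕ Fin _, (Sum.elim v xs z, Sum.elim w ys z) ∈ s := by
        rintro (a | i)
        · exact hv a
        · exact hx i
      show Structure.RelMap Language.adj (fun i => Term.realize (Sum.elim v xs) (ts i)) ↔
        Structure.RelMap Language.adj (fun i => Term.realize (Sum.elim w ys) (ts i))
      rw [relMap_eq_sim', relMap_eq_sim']
      simp only [hxv, Term.realize_var]
      exact (hgood _ (pair (xv 0)) _ (pair (xv 1))).2
  | imp φ₁ φ₂ ih₁ ih₂ =>
    intro s hgood hfin v w xs ys hv hx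
    rw [BoundedFormula.realize_imp, BoundedFormula.realize_imp]
    exact imp_congr (ih₁ s hgood hfin v w xs ys hv hx) (ih₂ s hgood hfin v w xs ys hv hx)
  | all φ' ih =>
    intro s hgood hfin v w xs ys hv hx
    rw [BoundedFormula.realize_all, BoundedFormula.realize_all]
    constructor
    · intro h d
      obtain ⟨c, hc⟩ := good_back hrefl hsymm htrans hge hle hmany s hgood hfin d
      refine (ih (insert (c, d) s) hc (hfin.insert _) v w (Fin.snoc xs c) (Fin.snoc ys d)
        (fun a => Set.mem_insert_iff.2 (Or.inr (hv a))) ?_).mp (h c)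
      intro i
      refine Fin.lastCases ?_ ?_ i
      · rw [Fin.snoc_last, Fin.snoc_last]
        exact Set.mem_insert _ _
      · intro i0
        rw [Fin.snoc_castSucc, Fin.snoc_castSucc]
        exact Set.mem_insert_iff.2 (Or.inr (hx i0))
    · intro h c
      obtain ⟨d, hd⟩ := good_forth hrefl hsymm htrans hge hle hmany s hgood hfin c
      refine (ih (insert (c, d) s) hd (hfin.insert _) v w (Fin.snoc xs c) (Fin.snoc ys d)
        (fun a => Set.mem_insert_iff.2 (Or.inr (hv a))) ?_).mpr (h d)
      intro i
      refine Fin.lastCases ?_ ?_ i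
      · rw [Fin.snoc_last, Fin.snoc_last]
        exact Set.mem_insert _ _
      · intro i0
        rw [Fin.snoc_castSucc, Fin.snoc_castSucc]
        exact Set.mem_insert_iff.2 (Or.inr (hx i0))

include hrefl hsymm htrans in
lemma karp_formula {j : ℕ} {α : Type*}
    (hge : ∀ a : N, ∃ y : Fin j → N, (∀ i, simRel N a (y i)) ∧ Function.Injective y)
    (hle : ∀ (a : N) (y : Fin (j + 1) → N), (∀ i, simRel N a (y i)) →
      ∃ i i', i ≠ i' ∧ y i = y i')
    (hmany : ∀ n, ∃ y : Fin n → N, ∀ i i', i ≠ i' → ¬ simRel N (y i) (y i'))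
    (φ : Language.graph.Formula α) (s : Set (N × N)) (hgood : Good N s) (hfin : s.Finite)
    (v w : α → N) (hv : ∀ a, (v a, w a) ∈ s) :
    φ.Realize v ↔ φ.Realize w :=
  karp hrefl hsymm htrans hge hle hmany φ s hgood hfin v w default default hv
    (fun i => i.elim0)

end Karp



section FreshCopy

variable {M : Type*} [Language.graph.Structure M]
  (hE : Equivalence (simRel M))
  (hinfcl : {s : Set M | ∃ a : M, s = {b : M | simRel M a b}}.Infinite)

include hE hinfcl in
lemma many_avoid_M (T : Set M) (hT : T.Finite) : ∃ d : M, ∀ t ∈ T, ¬ simRel M d t := by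
  classical
  set clOf : M → Set M := fun a => {b : M | simRel M a b} with hclOf
  have hcl_eq : ∀ x y : M, simRel M x y → clOf x = clOf y := by
    intro x y hxy
    ext b
    exact ⟨fun hb => hE.trans (hE.symm hxy) hb, fun hb => hE.trans hxy hb⟩
  have himg : (clOf '' T).Finite := hT.image _
  obtain ⟨s, hs, hsnot⟩ := (hinfcl.diff himg).nonempty
  obtain ⟨a, rfl⟩ := hs
  refine ⟨a, fun t ht hsim => ?_⟩
  exact hsnot ⟨t, ht, (hcl_eq a t hsim).symm⟩

include hE hinfcl in
lemma exists_reps_fin (F : Set M) (hF : F.Finite) (n : ℕ) :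
    ∃ rep : Fin n → M, (∀ q q', q ≠ q' → ¬ simRel M (rep q) (rep q')) ∧
      (∀ q, ∀ m ∈ F, ¬ simRel M (rep q) m) := by
  induction n with
  | zero => exact ⟨fun i => i.elim0, fun q => q.elim0, fun q => q.elim0⟩
  | succ n ih =>
    obtain ⟨rep, hrep1, hrep2⟩ := ih
    obtain ⟨d, hd⟩ := many_avoid_M hE hinfcl (F ∪ Set.range rep)
      (hF.union (Set.finite_range _))
    refine ⟨Fin.snoc rep d, ?_, ?_⟩
    · intro q q' hne
      rcases Fin.eq_castSucc_or_eq_last q with ⟨i0, rfl⟩ | rfl <;>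
        rcases Fin.eq_castSucc_or_eq_last q' with ⟨i0', rfl⟩ | rfl
      · rw [Fin.snoc_castSucc, Fin.snoc_castSucc]
        exact hrep1 i0 i0' (by rintro rfl; exact hne rfl)
      · rw [Fin.snoc_castSucc, Fin.snoc_last]
        intro hsim
        exact hd (rep i0) (Or.inr ⟨i0, rfl⟩) (hE.symm hsim)
      · rw [Fin.snoc_castSucc, Fin.snoc_last]
        exact hd (rep i0') (Or.inr ⟨i0', rfl⟩)
      · exact absurd rfl hne
    · intro q
      rcases Fin.eq_castSucc_or_eq_last q with ⟨i0, rfl⟩ | rfl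
      · rw [Fin.snoc_castSucc]
        exact hrep2 i0
      · rw [Fin.snoc_last]
        exact fun m hm => hd m (Or.inl hm)

include hE hinfcl in
lemma exists_reps {Q : Type*} [Finite Q] (F : Set M) (hF : F.Finite) :
    ∃ rep : Q → M, (∀ q q', q ≠ q' → ¬ simRel M (rep q) (rep q')) ∧
      (∀ q, ∀ m ∈ F, ¬ simRel M (rep q) m) := by
  obtain ⟨n, ⟨e⟩⟩ := Finite.exists_equiv_fin Q
  obtain ⟨rep, h1, h2⟩ := exists_reps_fin hE hinfcl F hF n
  exact ⟨rep ∘ e, fun q q' hne => h1 _ _ (fun h => hne (e.injective h)), fun q => h2 _⟩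

include hE in
/-- the fresh copy of `B` in `M`, avoiding the classes of elements of `F` -/
lemma fresh_copy {j : ℕ} (hj : 2 ≤ j)
    (hsize : ∀ a : M, Nat.card {b : M // simRel M a b} = j)
    (hinfcl : {s : Set M | ∃ a : M, s = {b : M | simRel M a b}}.Infinite)
    (B : Type*) [Language.graph.Structure B] [Finite B] (gB : B ↪[Language.graph] M)
    (F : Set M) (hF : F.Finite) :
    ∃ g : B ↪[Language.graph] M, ∀ b : B, ∀ m ∈ F, ¬ simRel M (g b) m := by
  classical
  letI sB : Setoid B := ⟨fun b b' => simRel M (gB b) (gB b'),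
    ⟨fun b => hE.refl _, fun h => hE.symm h, fun h h' => hE.trans h h'⟩⟩
  letI : Finite (Quotient sB) := Quotient.finite _
  obtain ⟨rep, hrep1, hrep2⟩ := exists_reps hE hinfcl (Q := Quotient sB) F hF
  -- for each class q, an injection from the members of q into the class of rep q
  have hinj : ∀ q : Quotient sB,
      Nonempty ({b : B // Quotient.mk sB b = q} ↪ {m : M // simRel M (rep q) m}) := by
    intro q
    letI : Fintype {b : B // Quotient.mk sB b = q} := Fintype.ofFinite _
    have hfin2 : Finite {m : M // simRel M (rep q) m} :=
      Nat.finite_of_card_ne_zero (by rw [hsize (rep q)]; omega)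
    letI : Fintype {m : M // simRel M (rep q) m} := Fintype.ofFinite _
    apply Function.Embedding.nonempty_of_card_le
    -- card of the B-class is at most j
    have h1 : Fintype.card {b : B // Quotient.mk sB b = q} ≤ j := by
      obtain ⟨b0, hb0⟩ := q.exists_rep
      have hfin3 : Finite {m : M // simRel M (gB b0) m} :=
        Nat.finite_of_card_ne_zero (by rw [hsize (gB b0)]; omega)
      letI : Fintype {m : M // simRel M (gB b0) m} := Fintype.ofFinite _
      have hle := Fintype.card_le_of_injective
        (fun b : {b : B // Quotient.mk sB b = q} =>
          (⟨gB b.1, by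
            have h9 : Quotient.mk sB b0 = Quotient.mk sB b.1 := by rw [b.2, hb0]
            show simRel M (gB b0) (gB b.1)
            exact Quotient.eq''.mp h9⟩ :
            {m : M // simRel M (gB b0) m}))
        (fun b b' hbb => by
          apply Subtype.ext
          exact gB.injective (congrArg Subtype.val hbb))
      calc Fintype.card {b : B // Quotient.mk sB b = q}
          ≤ Fintype.card {m : M // simRel M (gB b0) m} := hle
        _ = j := by rw [← Nat.card_eq_fintype_card, hsize]
    have h2 : Fintype.card {m : M // simRel M (rep q) m} = j := by
      rw [← Nat.card_eq_fintype_card, hsize]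
    omega
  have ι := fun q => Classical.choice (hinj q)
  set g : B → M := fun b => (ι (Quotient.mk sB b) ⟨b, rfl⟩).1 with hg
  have g_eq : ∀ (b : B) (q : Quotient sB) (hq : Quotient.mk sB b = q),
      g b = (ι q ⟨b, hq⟩).1 := by
    intro b q hq
    cases hq
    rfl
  have hgcls : ∀ b : B, simRel M (rep (Quotient.mk sB b)) (g b) :=
    fun b => (ι (Quotient.mk sB b) ⟨b, rfl⟩).2
  have key : ∀ b b' : B, simRel M (g b) (g b') ↔ Quotient.mk sB b = Quotient.mk sB b' := by
    intro b b'
    constructor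
    · intro h
      by_contra hne
      exact hrep1 _ _ hne (hE.trans (hE.trans (hgcls b) h) (hE.symm (hgcls b')))
    · intro h
      exact hE.trans (hE.symm (hgcls b)) (h ▸ hgcls b')
  have ginj : Function.Injective g := by
    intro b b' hbb
    have hq : Quotient.mk sB b = Quotient.mk sB b' := (key b b').mp (hbb ▸ hE.refl _)
    have e1 : g b = (ι (Quotient.mk sB b) ⟨b, rfl⟩).1 := rfl
    have e2 : g b' = (ι (Quotient.mk sB b) ⟨b', hq.symm⟩).1 := g_eq b' _ hq.symm
    have : (ι (Quotient.mk sB b)) ⟨b, rfl⟩ = (ι (Quotient.mk sB b)) ⟨b', hq.symm⟩ :=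
      Subtype.ext (by rw [← e1, ← e2, hbb])
    have := (ι (Quotient.mk sB b)).injective this
    exact congrArg Subtype.val this
  refine ⟨⟨⟨g, ginj⟩, fun {n} f => isEmptyElim f, fun {n} r x => ?_⟩, fun b m hm hsim => ?_⟩
  · cases r with
    | adj =>
      rw [relMap_eq_sim, relMap_eq_sim]
      show simRel M (g (x 0)) (g (x 1)) ↔ simRel B (x 0) (x 1)
      rw [key, ← emb_sim gB]
      exact ⟨fun h => Quotient.exact h, fun h => Quotient.sound h⟩
  · have hsim' : simRel M (g b) m := hsim
    exact hrep2 (Quotient.mk sB b) m hm (hE.trans (hgcls b) hsim')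

end FreshCopy



/-- the structure on a type where every pair is related -/
def allRel (X : Type*) : Language.graph.Structure X where
  funMap := fun {n} f _ => isEmptyElim f
  RelMap := fun {n} _ _ => True

section Neg

variable {M : Type} [Infinite M] [Language.graph.Structure M]

/-- constant embedding from the all-related one-point structure -/
noncomputable def constEmb (hE : Equivalence (simRel M)) (x : M) :
    letI := allRel PUnit
    PUnit ↪[Language.graph] M :=
  letI := allRel PUnit
  { toFun := fun _ => x
    inj' := fun a b _ => Subsingleton.elim a b
    map_fun' := fun {n} f _ => isEmptyElim f
    map_rel' := fun {n} r y => by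
      cases r with
      | adj =>
        rw [relMap_eq_sim]
        exact iff_of_true (hE.refl x) trivial }

theorem not_pointRamsey (j : ℕ) (hj : 2 ≤ j)
    (hE : Equivalence (simRel M))
    (hsize : ∀ a : M, Nat.card {b : M // simRel M a b} = j) :
    ¬ PointRamsey Language.graph M := by
  classical
  intro hPR
  letI instA : Language.graph.Structure PUnit := allRel PUnit
  letI instB : Language.graph.Structure (Fin j) := allRel (Fin j)
  have m₀ : M := Classical.arbitrary M
  -- embedding of the one-point structure
  have hA : Nonempty (PUnit ↪[Language.graph] M) := ⟨constEmb hE m₀⟩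
  -- embedding of the all-related structure on Fin j, onto the class of m₀
  have hBfin : Finite {b : M // simRel M m₀ b} :=
    Nat.finite_of_card_ne_zero (by rw [hsize m₀]; omega)
  have eB : {b : M // simRel M m₀ b} ≃ Fin j := Finite.equivFinOfCardEq (hsize m₀)
  have hB : Nonempty (Fin j ↪[Language.graph] M) := by
    refine ⟨{ toFun := fun i => (eB.symm i).1
              inj' := fun a b hab => by
                have := eB.symm.injective (Subtype.ext hab)
                exact this
              map_fun' := fun {n} f _ => isEmptyElim f
              map_rel' := fun {n} r y => by
                cases r with
                | adj =>
                  rw [relMap_eq_sim]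
                  refine iff_of_true ?_ trivial
                  exact hE.trans (hE.symm (eB.symm (y 0)).2) (eB.symm (y 1)).2 }⟩
  letI st : Setoid M := ⟨simRel M, hE⟩
  set χ : (PUnit ↪[Language.graph] M) → Fin 2 :=
    fun f => if (Quotient.mk st (f PUnit.unit)).out = f PUnit.unit then 0 else 1 with hχ
  obtain ⟨g, hmono⟩ := hPR PUnit inferInstance (by simp) hA 2 (by omega) (Fin j)
    inferInstance hB χ
  set zero : Fin j := ⟨0, by omega⟩ with hzero
  set c : M := g zero with hc
  have hall : ∀ b : Fin j, simRel M c (g b) := fun b => (emb_sim g zero b).mpr trivial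
  -- the range of g is exactly the class of c
  have hsub : Set.range (g : Fin j → M) ⊆ {x : M | simRel M c x} := by
    rintro _ ⟨b, rfl⟩; exact hall b
  have hncard1 : ({x : M | simRel M c x}).ncard = j := by
    rw [← Nat.card_coe_set_eq]
    exact hsize c
  have hncard2 : (Set.range (g : Fin j → M)).ncard = j := by
    rw [← Nat.card_coe_set_eq, Nat.card_range_of_injective g.injective, Nat.card_eq_fintype_card,
      Fintype.card_fin]
  have hfin : ({x : M | simRel M c x}).Finite := by
    have h9 : Finite {b : M // simRel M c b} :=
      Nat.finite_of_card_ne_zero (by rw [hsize c]; omega)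
    exact Set.finite_coe_iff.mp (by exact h9)
  have hrange : Set.range (g : Fin j → M) = {x : M | simRel M c x} :=
    Set.eq_of_subset_of_ncard_le hsub (by omega) hfin
  set t : M := (Quotient.mk st c).out with ht
  have htc : simRel M t c := Quotient.mk_out c
  have htmem : t ∈ Set.range (g : Fin j → M) := by
    rw [hrange]; exact hE.symm htc
  obtain ⟨u, humem, hut⟩ := Set.exists_ne_of_one_lt_ncard (by omega : 1 < (Set.range (g : Fin j → M)).ncard) t
  have hmkc : ∀ x ∈ Set.range (g : Fin j → M), Quotient.mk st x = Quotient.mk st c := by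
    intro x hx
    rw [hrange] at hx
    exact Quotient.sound (hE.symm hx)
  have hχt : χ (constEmb hE t) = 0 := by
    rw [hχ]
    simp only []
    rw [if_pos]
    show (Quotient.mk st t).out = t
    rw [hmkc t htmem]
  have hχu : χ (constEmb hE u) = 1 := by
    rw [hχ]
    simp only []
    rw [if_neg]
    show ¬ (Quotient.mk st u).out = u
    rw [hmkc u humem]
    exact fun h => hut h.symm
  have hrt : Set.range ((constEmb hE t : PUnit ↪[Language.graph] M) : PUnit → M) ⊆
      Set.range (g : Fin j → M) := by
    rintro _ ⟨a, rfl⟩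
    exact htmem
  have hru : Set.range ((constEmb hE u : PUnit ↪[Language.graph] M) : PUnit → M) ⊆
      Set.range (g : Fin j → M) := by
    rintro _ ⟨a, rfl⟩
    exact humem
  have := hmono (constEmb hE t) (constEmb hE u) hrt hru
  rw [hχt, hχu] at this
  exact absurd this (by decide)

end Neg


section Pos

variable {M : Type} [Countable M] [Infinite M] [Language.graph.Structure M]

theorem extDefRamsey (j : ℕ) (hj : 2 ≤ j)
    (hE : Equivalence (simRel M))
    (hsize : ∀ a : M, Nat.card {b : M // simRel M a b} = j)
    (hinfcl : {s : Set M | ∃ a : M, s = {b : M | simRel M a b}}.Infinite) :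
    ExtDefRamsey Language.graph M := by
  classical
  intro A instA hAfin hAne k hk B instB hBfin hBne χ hdef
  obtain ⟨gB⟩ := hBne
  obtain ⟨e, φ, N, emb, eb, hχ⟩ := hdef
  -- sentences true in M
  have hMrefl : M ⊨ reflS := realize_reflS.mpr (fun a => hE.refl a)
  have hMsymm : M ⊨ symmS := realize_symmS.mpr (fun a b h => hE.symm h)
  have hMtrans : M ⊨ transS := realize_transS.mpr (fun a b c h h' => hE.trans h h')
  have hMge : M ⊨ geS j := by
    rw [realize_geS]
    intro a
    have hfin : Finite {b : M // simRel M a b} :=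
      Nat.finite_of_card_ne_zero (by rw [hsize a]; omega)
    have eqv : {b : M // simRel M a b} ≃ Fin j := Finite.equivFinOfCardEq (hsize a)
    exact ⟨fun i => (eqv.symm i).1, fun i => (eqv.symm i).2,
      fun i i' h => eqv.symm.injective (Subtype.ext h)⟩
  have hMle : M ⊨ leS j := by
    rw [realize_leS]
    intro a y hy
    have hfin : Finite {b : M // simRel M a b} :=
      Nat.finite_of_card_ne_zero (by rw [hsize a]; omega)
    letI : Fintype {b : M // simRel M a b} := Fintype.ofFinite _
    have hcard : Fintype.card {b : M // simRel M a b} < Fintype.card (Fin (j + 1)) := by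
      rw [← Nat.card_eq_fintype_card, hsize a, Fintype.card_fin]
      omega
    obtain ⟨i, i', hne, heq⟩ := Fintype.exists_ne_map_eq_of_card_lt
      (fun i : Fin (j + 1) => (⟨y i, hy i⟩ : {b : M // simRel M a b})) hcard
    exact ⟨i, i', hne, congrArg Subtype.val heq⟩
  have hMmany : ∀ n, M ⊨ manyS n := by
    intro n
    rw [realize_manyS]
    obtain ⟨y, hy1, _⟩ := exists_reps_fin hE hinfcl ∅ Set.finite_empty n
    exact ⟨y, hy1⟩
  -- transfer to N
  have hNrefl : ∀ a : ↥N, simRel ↥N a a :=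
    realize_reflS.mp ((emb.map_sentence _).mp hMrefl)
  have hNsymm : ∀ a b : ↥N, simRel ↥N a b → simRel ↥N b a :=
    realize_symmS.mp ((emb.map_sentence _).mp hMsymm)
  have hNtrans : ∀ a b c : ↥N, simRel ↥N a b → simRel ↥N b c → simRel ↥N a c :=
    realize_transS.mp ((emb.map_sentence _).mp hMtrans)
  have hNge : ∀ a : ↥N, ∃ y : Fin j → ↥N, (∀ i, simRel ↥N a (y i)) ∧ Function.Injective y :=
    realize_geS.mp ((emb.map_sentence _).mp hMge)
  have hNle : ∀ (a : ↥N) (y : Fin (j + 1) → ↥N), (∀ i, simRel ↥N a (y i)) →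
      ∃ i i', i ≠ i' ∧ y i = y i' :=
    realize_leS.mp ((emb.map_sentence _).mp hMle)
  have hNmany : ∀ n, ∃ y : Fin n → ↥N, ∀ i i', i ≠ i' → ¬ simRel ↥N (y i) (y i') :=
    fun n => realize_manyS.mp ((emb.map_sentence _).mp (hMmany n))
  -- the forbidden set: elements of M equivalent (in N) to some parameter
  set Bad : Fin e → Set M := fun r => {m : M | simRel ↥N (emb m) (eb r)} with hBad
  have hBadfin : ∀ r, (Bad r).Finite := by
    intro r
    rcases Set.eq_empty_or_nonempty (Bad r) with h | ⟨m0, hm0⟩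
    · rw [h]; exact Set.finite_empty
    · have hsub : Bad r ⊆ {b : M | simRel M m0 b} := by
        intro m hm
        have : simRel ↥N (emb m0) (emb m) :=
          hNtrans _ _ _ hm0 (hNsymm _ _ hm)
        exact (ee_sim emb m0 m).mp this
      have hfin : Finite {b : M // simRel M m0 b} :=
        Nat.finite_of_card_ne_zero (by rw [hsize m0]; omega)
      exact Set.Finite.subset (Set.finite_coe_iff.mp (by exact hfin)) hsub
  have hFfin : (⋃ r, Bad r).Finite := Set.finite_iUnion hBadfin
  obtain ⟨g, hg⟩ := fresh_copy hE hj hsize hinfcl B gB (⋃ r, Bad r) hFfin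
  have hfresh : ∀ (b : B) (r : Fin e), ¬ simRel ↥N (emb (g b)) (eb r) := by
    intro b r hsim
    exact hg b (g b) (Set.mem_iUnion.2 ⟨r, hsim⟩) (hE.refl _)
  refine ⟨g, ?_⟩
  intro f₁ f₂ h₁ h₂
  have hfresh₁ : ∀ (a : A) (r : Fin e), ¬ simRel ↥N (emb (f₁ a)) (eb r) := by
    intro a r
    obtain ⟨b, hb⟩ := h₁ ⟨a, rfl⟩
    rw [← hb]
    exact hfresh b r
  have hfresh₂ : ∀ (a : A) (r : Fin e), ¬ simRel ↥N (emb (f₂ a)) (eb r) := by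
    intro a r
    obtain ⟨b, hb⟩ := h₂ ⟨a, rfl⟩
    rw [← hb]
    exact hfresh b r
  set s₀ : Set (↥N × ↥N) :=
    (Set.range fun r : Fin e => (eb r, eb r)) ∪
      (Set.range fun a : A => (emb (f₁ a), emb (f₂ a))) with hs₀
  have hs₀fin : s₀.Finite := (Set.finite_range _).union (Set.finite_range _)
  have hgood : Good ↥N s₀ := by
    have mem_cases : ∀ p ∈ s₀, (∃ r, p = (eb r, eb r)) ∨ ∃ a, p = (emb (f₁ a), emb (f₂ a)) := by
      rintro p (⟨r, rfl⟩ | ⟨a, rfl⟩)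
      · exact Or.inl ⟨r, rfl⟩
      · exact Or.inr ⟨a, rfl⟩
    intro p hp q hq
    rcases mem_cases p hp with ⟨r, rfl⟩ | ⟨a, rfl⟩ <;>
      rcases mem_cases q hq with ⟨r', rfl⟩ | ⟨a', rfl⟩ <;> dsimp only
    · exact ⟨Iff.rfl, Iff.rfl⟩
    · refine ⟨iff_of_false ?_ ?_, iff_of_false ?_ ?_⟩
      · intro h
        exact hfresh₁ a' r (hNsymm _ _ (by rw [← h]; exact hNrefl _))
      · intro h
        exact hfresh₂ a' r (hNsymm _ _ (by rw [← h]; exact hNrefl _))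
      · intro h
        exact hfresh₁ a' r (hNsymm _ _ h)
      · intro h
        exact hfresh₂ a' r (hNsymm _ _ h)
    · refine ⟨iff_of_false ?_ ?_, iff_of_false ?_ ?_⟩
      · intro h
        exact hfresh₁ a r' (by rw [h]; exact hNrefl _)
      · intro h
        exact hfresh₂ a r' (by rw [h]; exact hNrefl _)
      · intro h
        exact hfresh₁ a r' h
      · intro h
        exact hfresh₂ a r' h
    · constructor
      · constructor
        · intro h
          have : f₁ a = f₁ a' := emb.injective h
          have : a = a' := f₁.injective this
          rw [this]
        · intro h
          have : f₂ a = f₂ a' := emb.injective h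
          have : a = a' := f₂.injective this
          rw [this]
      · have c1 : simRel ↥N (emb (f₁ a)) (emb (f₁ a')) ↔ simRel A a a' := by
          rw [ee_sim emb, emb_sim f₁]
        have c2 : simRel ↥N (emb (f₂ a)) (emb (f₂ a')) ↔ simRel A a a' := by
          rw [ee_sim emb, emb_sim f₂]
        rw [c1, c2]
  have hKarp : ∀ i : Fin k,
      ((φ i).Realize (Sum.elim eb fun a => emb (f₁ a)) ↔
        (φ i).Realize (Sum.elim eb fun a => emb (f₂ a))) := by
    intro i
    apply karp_formula hNrefl hNsymm hNtrans hNge hNle hNmany (φ i) s₀ hgood hs₀fin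
    rintro (r | a)
    · exact Or.inl ⟨r, rfl⟩
    · exact Or.inr ⟨a, rfl⟩
  have h1 := (hχ f₁ (χ f₁)).mp rfl
  exact ((hχ f₂ (χ f₁)).mpr ((hKarp (χ f₁)).mp h1)).symm

end Pos

/-- **Proposition 6.3(1).** Fix `2 ≤ j`. If `M` is a countably infinite structure in the
language of a single binary relation `∼` interpreted as an equivalence relation with
infinitely many classes, each of size exactly `j`, then `M` has the externally definable
Ramsey property, but not the point-Ramsey property. -/
theorem eqRel_classes_size_j (j : ℕ) (hj : 2 ≤ j)
    (M : Type) [Countable M] [Infinite M] [Language.graph.Structure M]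
    (hE : Equivalence (simRel M))
    (hsize : ∀ a : M, Nat.card {b : M // simRel M a b} = j)
    (hinfcl : {s : Set M | ∃ a : M, s = {b : M | simRel M a b}}.Infinite) :
    ExtDefRamsey Language.graph M ∧ ¬ PointRamsey Language.graph M := by
  constructor
  · exact extDefRamsey j hj hE hsize hinfcl
  · exact not_pointRamsey j hj hE hsize

end EDRP
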